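/- arXiv:1312.2311 — 8 statements merged into one kernel-verified Lean document; each statement's English description precedes it below -/
import Mathlib

section
/- The intersection over all k ∈ ℕ of the k-closures G^(k) equals the topological closure of G in Aut(T). -/
open SimpleGraph Set

variable {V : Type*}

/-- The ball of radius `k` about the vertex `v`, with respect to the path metric. -/
def ball (T : SimpleGraph V) (v : V) (k : ℕ) : Set V := {u | T.dist v u ≤ k}

/-- `g` fixes the vertex set `S` pointwise. -/
def Fixes {T : SimpleGraph V} (g : T ≃g T) (S : Set V) : Prop := ∀ u ∈ S, g u = u

/-- The `k`-closure of a set `S` of automorphisms of `T`: all automorphisms that agree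
with some element of `S` on every ball of radius `k`. -/
def kClosure (T : SimpleGraph V) (S : Set (T ≃g T)) (k : ℕ) : Set (T ≃g T) :=
  {x | ∀ v : V, ∃ g ∈ S, ∀ u ∈ _root_.ball T v k, g u = x u}

/-- A (non-empty) subtree of a tree, viewed as a geodesically convex set of vertices. -/
def IsSubtree (T : SimpleGraph V) (Y : Set V) : Prop :=
  Y.Nonempty ∧ ∀ u ∈ Y, ∀ v ∈ Y, ∀ w : V, T.dist u w + T.dist w v = T.dist u v → w ∈ Y

/-- `G` stabilises the vertex set `Y` (setwise). -/
def Stabilizes {T : SimpleGraph V} (S : Set (T ≃g T)) (Y : Set V) : Prop :=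
  ∀ g ∈ S, (fun u => g u) '' Y = Y

/-- The semi-tree `T_{(v,w)}`: the component of `w` after removing the edge pair
`{(v,w),(w,v)}`, i.e. the vertices strictly closer to `w` than to `v`. -/
def semiTree (T : SimpleGraph V) (v w : V) : Set V := {u | T.dist w u < T.dist v u}

/-- The permutation topology on `Aut(T)`: pointwise convergence on vertices. -/
instance autTopology (T : SimpleGraph V) : TopologicalSpace (T ≃g T) :=
  TopologicalSpace.induced (fun g => (g : V → V))
    (@Pi.topologicalSpace V (fun _ => V) (fun _ => ⊥))

lemma ball_finite (T : SimpleGraph V) (hc : T.Connected)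
    (hlf : ∀ v : V, (T.neighborSet v).Finite) (v : V) (k : ℕ) :
    (_root_.ball T v k).Finite := by
  induction k with
  | zero =>
    refine Set.Finite.subset (Set.finite_singleton v) ?_
    intro u hu
    have : T.dist v u = 0 := Nat.le_zero.mp hu
    have := ((hc v u).dist_eq_zero_iff).mp this
    simp [this.symm]
  | succ k ih =>
    refine Set.Finite.subset (ih.biUnion (fun w _ => (hlf w).insert w)) ?_
    intro u hu
    obtain ⟨p, hp⟩ := (hc v u).exists_walk_length_eq_dist
    have hlen : p.reverse.length ≤ k + 1 := by
      rw [SimpleGraph.Walk.length_reverse, hp]; exact hu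
    set q := p.reverse with hq
    clear_value q
    cases q with
    | nil =>
      exact Set.mem_biUnion (show v ∈ _root_.ball T v k by simp [_root_.ball, SimpleGraph.dist_self]) (Set.mem_insert _ _)
    | cons h q' =>
      rename_i b
      have hb : T.dist v b ≤ k := by
        calc T.dist v b = T.dist b v := SimpleGraph.dist_comm
        _ ≤ q'.length := SimpleGraph.dist_le q'
        _ ≤ k := by simpa using Nat.succ_le_succ_iff.mp hlen
      exact Set.mem_biUnion hb (Set.mem_insert_iff.mpr (Or.inr h.symm))

lemma isOpen_agree (T : SimpleGraph V) (F : Set V) (hF : F.Finite) (x : T ≃g T) :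
    IsOpen {y : T ≃g T | ∀ u ∈ F, y u = x u} := by
  have heq : {y : T ≃g T | ∀ u ∈ F, y u = x u}
      = (fun g : T ≃g T => (g : V → V)) ⁻¹' (F.pi fun u => {x u}) := by
    ext y; simp [Set.mem_pi]
  rw [heq]
  letI : TopologicalSpace V := ⊥
  haveI : DiscreteTopology V := ⟨rfl⟩
  exact isOpen_induced (isOpen_set_pi hF fun a _ => isOpen_discrete _)

/-- the intersection of all the `k`-closures of `G` is the topological
closure of `G` in `Aut(T)`. -/
theorem iInter_kClosure_eq_closure (T : SimpleGraph V) (hT : T.IsTree)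
    (hlf : ∀ v : V, (T.neighborSet v).Finite)
    (G : Subgroup (T ≃g T)) :
    ⋂ k : ℕ, kClosure T (G : Set (T ≃g T)) k = closure (G : Set (T ≃g T)) := by
  have hc := hT.isConnected
  ext x
  simp only [Set.mem_iInter]
  constructor
  · intro h
    rw [mem_closure_iff]
    intro o ho hxo
    obtain ⟨O, hO, rfl⟩ :=
      (@isOpen_induced_iff (T ≃g T) (V → V) (@Pi.topologicalSpace V (fun _ => V) (fun _ => ⊥))
        o (fun g : T ≃g T => (g : V → V))).mp ho
    obtain ⟨I, u, hIu, hsub⟩ :=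
      (@isOpen_pi_iff V (fun _ => V) (fun _ => ⊥) O).mp hO _ hxo
    rcases I.eq_empty_or_nonempty with hI | ⟨v, hv⟩
    · refine ⟨1, ?_, G.one_mem⟩
      apply hsub
      intro a ha
      simp [hI] at ha
    · set k := I.sup (fun i => T.dist v i) with hk
      obtain ⟨g, hgG, hg⟩ := h k v
      refine ⟨g, ?_, hgG⟩
      apply hsub
      intro a ha
      have hak : T.dist v a ≤ k := Finset.le_sup (Finset.mem_coe.mp ha)
      have := hg a hak
      show (g : V → V) a ∈ u a
      rw [show (g : V → V) a = (x : V → V) a from this]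
      exact (hIu a (Finset.mem_coe.mp ha)).2
  · intro h k v
    have hfin := ball_finite T hc hlf v k
    have ho := isOpen_agree T (_root_.ball T v k) hfin x
    obtain ⟨g, hg1, hg2⟩ := mem_closure_iff.mp h _ ho (fun u _ => rfl)
    exact ⟨g, hg2, fun u hu => hg1 u hu⟩
end

section
/- A group G of automorphisms of a tree T stabilises no proper non-empty subtree of T if and only if for every vertex v the orbit G.v meets every semi-tree of T. -/
open SimpleGraph Set

variable {V : Type*}

section AuxLemmas

private lemma dist_map' {T : SimpleGraph V} (hc : T.Connected) (g : T ≃g T) (u v : V) :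
    T.dist (g u) (g v) = T.dist u v := by
  have key : ∀ (h : T ≃g T) (x y : V), T.dist (h x) (h y) ≤ T.dist x y := by
    intro h x y
    obtain ⟨p, hp⟩ := hc.exists_walk_length_eq_dist x y
    calc T.dist (h x) (h y) ≤ (p.map h.toHom).length := SimpleGraph.dist_le _
      _ = T.dist x y := by rw [SimpleGraph.Walk.length_map, hp]
  refine le_antisymm (key g u v) ?_
  have := key g.symm (g u) (g v)
  simpa using this

private lemma edge_mem_walk {T : SimpleGraph V} (hT : T.IsTree) {a b : V} (hab : T.Adj a b)
    (W : T.Walk a b) : s(a, b) ∈ W.edges := by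
  classical
  have huniq := hT.IsAcyclic.path_unique ⟨W.bypass, W.bypass_isPath⟩ (Path.singleton hab)
  have hval : W.bypass = (Path.singleton hab : T.Path a b).1 := congrArg Subtype.val huniq
  have he : s(a, b) ∈ W.bypass.edges := by
    rw [hval]
    simp [Path.singleton]
  exact W.edges_bypass_subset he

private lemma dist_add_dist_le_support {T : SimpleGraph V} {c u x : V} (P : T.Walk c u)
    (hx : x ∈ P.support) : T.dist c x + T.dist x u ≤ P.length := by
  classical
  have hs := P.take_spec hx
  have hl : (P.takeUntil x hx).length + (P.dropUntil x hx).length = P.length := by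
    rw [← SimpleGraph.Walk.length_append, hs]
  have h1 : T.dist c x ≤ (P.takeUntil x hx).length := SimpleGraph.dist_le _
  have h2 : T.dist x u ≤ (P.dropUntil x hx).length := SimpleGraph.dist_le _
  omega

private lemma tree_dist_ne {T : SimpleGraph V} (hT : T.IsTree) {a b : V} (hab : T.Adj a b)
    (u : V) : T.dist a u ≠ T.dist b u := by
  intro h
  obtain ⟨P, hP⟩ := hT.isConnected.exists_walk_length_eq_dist a u
  obtain ⟨Q, hQ⟩ := hT.isConnected.exists_walk_length_eq_dist b u
  have hW := edge_mem_walk hT hab (P.append Q.reverse)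
  rw [SimpleGraph.Walk.edges_append] at hW
  have h1 : T.dist a b = 1 := SimpleGraph.dist_eq_one_iff_adj.2 hab
  rcases List.mem_append.1 hW with hPe | hQe
  · have hb : b ∈ P.support := P.snd_mem_support_of_mem_edges hPe
    have := dist_add_dist_le_support P hb
    omega
  · rw [SimpleGraph.Walk.edges_reverse, List.mem_reverse] at hQe
    have ha : a ∈ Q.support := Q.fst_mem_support_of_mem_edges hQe
    have := dist_add_dist_le_support Q ha
    have h2 : T.dist b a = 1 := SimpleGraph.dist_eq_one_iff_adj.2 hab.symm
    omega

private lemma tree_crossing {T : SimpleGraph V} (hT : T.IsTree) {a b u u' : V}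
    (hab : T.Adj a b) (huu' : T.Adj u u') (hu : T.dist b u < T.dist a u)
    (hu' : T.dist a u' < T.dist b u') : u = b ∧ u' = a := by
  obtain ⟨P, hP⟩ := hT.isConnected.exists_walk_length_eq_dist a u'
  obtain ⟨Q, hQ⟩ := hT.isConnected.exists_walk_length_eq_dist u b
  have hW := edge_mem_walk hT hab (P.append (SimpleGraph.Walk.cons huu'.symm Q))
  rw [SimpleGraph.Walk.edges_append, SimpleGraph.Walk.edges_cons] at hW
  have h1 : T.dist a b = 1 := SimpleGraph.dist_eq_one_iff_adj.2 hab
  rcases List.mem_append.1 hW with hPe | hmid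
  · exfalso
    have hb : b ∈ P.support := P.snd_mem_support_of_mem_edges hPe
    have := dist_add_dist_le_support P hb
    omega
  · rcases List.mem_cons.1 hmid with heq | hQe
    · rcases Sym2.eq_iff.1 heq with ⟨h2, h3⟩ | ⟨h2, h3⟩
      · exact ⟨h3.symm, h2.symm⟩
      · exfalso
        subst h2 h3
        simp [SimpleGraph.dist_self] at hu
    · exfalso
      have ha : a ∈ Q.support := Q.fst_mem_support_of_mem_edges hQe
      have := dist_add_dist_le_support Q ha
      have h2 : T.dist u a = T.dist a u := SimpleGraph.dist_comm ..
      have h3 : T.dist u b = T.dist b u := SimpleGraph.dist_comm ..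
      omega

private lemma tree_cross_bound {T : SimpleGraph V} (hT : T.IsTree) {a b : V}
    (hab : T.Adj a b) :
    ∀ {x w : V} (P : T.Walk x w), P.length = T.dist x w → T.dist a w < T.dist b w →
      T.dist b x < T.dist a x → T.dist x b + 1 + T.dist a w ≤ P.length := by
  intro x w P
  induction P with
  | nil =>
    intro _ h1 h2
    omega
  | @cons x x₁ w' h p ih =>
    intro hlen hw hx
    rw [SimpleGraph.Walk.length_cons] at hlen
    have htri : T.dist x w' ≤ T.dist x x₁ + T.dist x₁ w' := hT.isConnected.dist_triangle
    have hxx₁ : T.dist x x₁ = 1 := SimpleGraph.dist_eq_one_iff_adj.2 h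
    have hple : T.dist x₁ w' ≤ p.length := SimpleGraph.dist_le p
    have hgeo : p.length = T.dist x₁ w' := by omega
    rcases Nat.lt_or_ge (T.dist b x₁) (T.dist a x₁) with hside | hside
    · have hih := ih hgeo hw hside
      have htri2 : T.dist x b ≤ T.dist x x₁ + T.dist x₁ b := hT.isConnected.dist_triangle
      rw [SimpleGraph.Walk.length_cons]
      omega
    · have hside' : T.dist a x₁ < T.dist b x₁ :=
        lt_of_le_of_ne hside (tree_dist_ne hT hab x₁)
      obtain ⟨hxb, hx₁a⟩ := tree_crossing hT hab h hx hside'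
      subst hxb hx₁a
      rw [SimpleGraph.Walk.length_cons, SimpleGraph.dist_self, hgeo]
      omega

private lemma exists_boundary {T : SimpleGraph V} {Y : Set V} :
    ∀ {y z : V} (_ : T.Walk y z), y ∈ Y → z ∉ Y → ∃ a b, a ∈ Y ∧ b ∉ Y ∧ T.Adj a b := by
  intro y z W
  induction W with
  | nil => intro h1 h2; exact absurd h1 h2
  | @cons y y₁ z h p ih =>
    intro h1 h2
    by_cases hm : y₁ ∈ Y
    · exact ih hm h2
    · exact ⟨y, y₁, h1, hm, h⟩

end AuxLemmas

private lemma semiTree_convex {T : SimpleGraph V} (hT : T.IsTree) {a b x y w : V}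
    (hab : T.Adj a b) (hx : x ∈ semiTree T a b) (hy : y ∈ semiTree T a b)
    (hw : T.dist x w + T.dist w y = T.dist x y) : w ∈ semiTree T a b := by
  by_contra hcon
  have hxs : T.dist b x < T.dist a x := hx
  have hys : T.dist b y < T.dist a y := hy
  have hw' : T.dist a w < T.dist b w :=
    lt_of_le_of_ne (not_lt.1 hcon) (tree_dist_ne hT hab w)
  obtain ⟨P, hP⟩ := hT.isConnected.exists_walk_length_eq_dist x w
  obtain ⟨Q, hQ⟩ := hT.isConnected.exists_walk_length_eq_dist y w
  have h1 := tree_cross_bound hT hab P hP hw' hxs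
  have h2 := tree_cross_bound hT hab Q hQ hw' hys
  have htri : T.dist x y ≤ T.dist x b + T.dist b y := hT.isConnected.dist_triangle
  have hc1 : T.dist b y = T.dist y b := SimpleGraph.dist_comm ..
  have hc2 : T.dist w y = T.dist y w := SimpleGraph.dist_comm ..
  omega

/-- `G` stabilises no proper non-empty subtree of `T` iff every vertex
orbit meets every semi-tree of `T`. -/
theorem no_invariant_subtree_iff_orbits_meet_semiTrees (T : SimpleGraph V)
    (hT : T.IsTree) (G : Subgroup (T ≃g T)) :
    (¬ ∃ Y : Set V, IsSubtree T Y ∧ Y ≠ Set.univ ∧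
        Stabilizes (G : Set (T ≃g T)) Y) ↔
      ∀ v : V, ∀ a b : V, T.Adj a b → ∃ g ∈ G, g v ∈ semiTree T a b := by
  constructor
  · -- no invariant subtree → orbits meet semi-trees
    intro hno v a b hab
    by_contra hcon
    push_neg at hcon
    -- the orbit of v lies in the semi-tree on the `a` side
    have horb : ∀ g ∈ G, (g : T ≃g T) v ∈ semiTree T b a := by
      intro g hg
      have h1 := hcon g hg
      have h2 := tree_dist_ne hT hab ((g : T ≃g T) v)
      have h3 : ¬ T.dist b ((g : T ≃g T) v) < T.dist a ((g : T ≃g T) v) := h1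
      exact lt_of_le_of_ne (not_lt.1 h3) h2
    set Y : Set V := {x | ∀ g ∈ (G : Set (T ≃g T)), g x ∈ semiTree T b a} with hYdef
    apply hno
    refine ⟨Y, ⟨⟨v, horb⟩, ?_⟩, ?_, ?_⟩
    · -- convexity
      intro u hu v' hv' w hw g hg
      have h1 : T.dist (g u) (g w) + T.dist (g w) (g v') = T.dist (g u) (g v') := by
        rw [dist_map' hT.isConnected, dist_map' hT.isConnected, dist_map' hT.isConnected]
        exact hw
      exact semiTree_convex hT hab.symm (hu g hg) (hv' g hg) h1
    · -- proper
      intro hYuniv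
      have hbY : b ∈ Y := hYuniv ▸ Set.mem_univ b
      have := hbY 1 (SetLike.mem_coe.2 G.one_mem)
      have hb1 : ((1 : T ≃g T) b) = b := rfl
      rw [hb1] at this
      have : T.dist a b < T.dist b b := this
      simp [SimpleGraph.dist_self] at this
    · -- stabilised
      intro h hh
      apply Set.eq_of_subset_of_subset
      · rintro x ⟨y, hy, rfl⟩
        intro g hg
        have := hy (g * h) (mul_mem hg hh)
        exact this
      · intro x hx
        refine ⟨(h⁻¹ : T ≃g T) x, ?_, ?_⟩
        · intro g hg
          have := hx (g * h⁻¹) (mul_mem hg (inv_mem hh))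
          exact this
        · simp
  · -- orbits meet semi-trees → no invariant subtree
    rintro H ⟨Y, ⟨⟨y, hy⟩, hconv⟩, hne, hstab⟩
    obtain ⟨z, hz⟩ := (Set.ne_univ_iff_exists_notMem Y).1 hne
    obtain ⟨W⟩ := hT.isConnected y z
    obtain ⟨a, b, haY, hbY, hadj⟩ := exists_boundary W hy hz
    obtain ⟨g, hg, hgy⟩ := H y a b hadj
    have hgyY : (g : T ≃g T) y ∈ Y := by
      rw [← hstab g hg]
      exact ⟨y, hy, rfl⟩
    have hlt : T.dist b ((g : T ≃g T) y) < T.dist a ((g : T ≃g T) y) := hgy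
    have htri : T.dist a ((g : T ≃g T) y) ≤ T.dist a b + T.dist b ((g : T ≃g T) y) :=
      hT.isConnected.dist_triangle
    have h1 : T.dist a b = 1 := SimpleGraph.dist_eq_one_iff_adj.2 hadj
    have heq : T.dist a b + T.dist b ((g : T ≃g T) y) = T.dist a ((g : T ≃g T) y) := by omega
    exact hbY (hconv a haY ((g : T ≃g T) y) hgyY b heq)
end

section
/- Let G ≤ Aut(T) stabilise no proper non-empty subtree of T. If for some k ∈ ℕ the fixator Fix_G(B(v,k) ∩ B(w,k)) is trivial for every edge (v,w), then G^(k) = G. -/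
open SimpleGraph Set

variable {V : Type*}

/-- if `G` stabilises no proper non-empty subtree and all the fixators
`Fix_G(B(v,k) ∩ B(w,k))` (over edges `(v,w)`) are trivial, then `G^(k) = G`. -/
theorem kClosure_eq_of_trivial_fixators (T : SimpleGraph V) (hT : T.IsTree)
    (hlf : ∀ v : V, (T.neighborSet v).Finite)
    (G : Subgroup (T ≃g T)) (k : ℕ)
    (hmin : ¬ ∃ Y : Set V, IsSubtree T Y ∧ Y ≠ Set.univ ∧
        Stabilizes (G : Set (T ≃g T)) Y)
    (htriv : ∀ v w : V, T.Adj v w → ∀ g ∈ G,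
        (∀ u ∈ _root_.ball T v k ∩ _root_.ball T w k, g u = u) → g = 1) :
    kClosure T (G : Set (T ≃g T)) k = (G : Set (T ≃g T)) := by
  ext x
  constructor
  · intro hx
    choose g hgG hg using hx
    have key : ∀ v w : V, T.Adj v w → g v = g w := by
      intro v w hvw
      have h1 : (g w)⁻¹ * g v ∈ G := mul_mem (inv_mem (hgG w)) (hgG v)
      have h2 : ∀ u ∈ _root_.ball T v k ∩ _root_.ball T w k, ((g w)⁻¹ * g v) u = u := by
        intro u hu
        have e1 : g v u = x u := hg v u hu.1
        have e2 : g w u = x u := hg w u hu.2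
        show (g w)⁻¹ ((g v) u) = u
        rw [e1, ← e2]
        exact (g w).symm_apply_apply u
      have h3 := htriv v w hvw _ h1 h2
      exact (inv_mul_eq_one.mp h3).symm
    have const : ∀ v w : V, g v = g w := by
      intro v w
      obtain ⟨p⟩ := hT.isConnected.preconnected v w
      induction p with
      | nil => rfl
      | cons h p ih => exact (key _ _ h).trans ih
    obtain ⟨v₀⟩ := hT.isConnected.nonempty
    have hx0 : x = g v₀ := by
      have : ∀ u : V, (g v₀) u = x u := by
        intro u
        rw [const v₀ u]
        exact hg u u (by simp [_root_.ball, T.dist_self])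
      exact (RelIso.ext this).symm
    rw [hx0]
    exact hgG v₀
  · intro hx v
    exact ⟨x, hx, fun u _ => rfl⟩
end

section
/- Two subgroups G, H ≤ Aut(T) satisfy G^(k) = H^(k) if and only if: for each g ∈ G and each vertex v there exists h ∈ H with (h⁻¹g) restricted to B(v,k) lying in the restriction of stab_H(v) to B(v,k), and symmetrically for each h ∈ H and each vertex v there exists g ∈ G with (g⁻¹h)|_{B(v,k)} ∈ stab_G(v)|_{B(v,k)}. -/
open SimpleGraph Set

variable {V : Type*}

/-- criterion for two groups to have the same `k`-closure. -/
theorem kClosure_eq_iff (T : SimpleGraph V) (hT : T.IsTree)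
    (hlf : ∀ v : V, (T.neighborSet v).Finite)
    (G H : Subgroup (T ≃g T)) (k : ℕ) :
    kClosure T (G : Set (T ≃g T)) k = kClosure T (H : Set (T ≃g T)) k ↔
      ((∀ g ∈ G, ∀ v : V, ∃ h ∈ H, ∃ h' ∈ H, h' v = v ∧
          ∀ u ∈ _root_.ball T v k, (h⁻¹ * g) u = h' u) ∧
        (∀ h ∈ H, ∀ v : V, ∃ g ∈ G, ∃ g' ∈ G, g' v = v ∧
          ∀ u ∈ _root_.ball T v k, (g⁻¹ * h) u = g' u)) := by
  constructor
  · intro heq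
    constructor
    · intro g hg v
      have hx : (g : T ≃g T) ∈ kClosure T (G : Set (T ≃g T)) k :=
        fun w => ⟨g, hg, fun u _ => rfl⟩
      rw [heq] at hx
      obtain ⟨h, hh, hag⟩ := hx v
      refine ⟨h, hh, 1, one_mem H, rfl, fun u hu => ?_⟩
      show h⁻¹ (g u) = (1 : T ≃g T) u
      rw [← hag u hu]
      exact h.symm_apply_apply u
    · intro h hh v
      have hx : (h : T ≃g T) ∈ kClosure T (H : Set (T ≃g T)) k :=
        fun w => ⟨h, hh, fun u _ => rfl⟩
      rw [← heq] at hx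
      obtain ⟨g, hg, hag⟩ := hx v
      refine ⟨g, hg, 1, one_mem G, rfl, fun u hu => ?_⟩
      show g⁻¹ (h u) = (1 : T ≃g T) u
      rw [← hag u hu]
      exact g.symm_apply_apply u
  · rintro ⟨hGH, hHG⟩
    ext x
    constructor
    · intro hx v
      obtain ⟨g, hg, hag⟩ := hx v
      obtain ⟨h, hh, h', hh', -, hmatch⟩ := hGH g hg v
      refine ⟨h * h', mul_mem hh hh', fun u hu => ?_⟩
      have h1 : (h⁻¹ * g) u = h' u := hmatch u hu
      have h2 : h⁻¹ (g u) = h' u := h1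
      have : h (h' u) = g u := by
        rw [← h2]; exact h.apply_symm_apply (g u)
      show h (h' u) = x u
      rw [this]; exact hag u hu
    · intro hx v
      obtain ⟨h, hh, hah⟩ := hx v
      obtain ⟨g, hg, g', hg', -, hmatch⟩ := hHG h hh v
      refine ⟨g * g', mul_mem hg hg', fun u hu => ?_⟩
      have h2 : g⁻¹ (h u) = g' u := hmatch u hu
      have : g (g' u) = h u := by
        rw [← h2]; exact g.apply_symm_apply (h u)
      show g (g' u) = x u
      rw [this]; exact hah u hu
end

section
/- Suppose G, H ≤ Aut(T) satisfy: (i) for all vertices v, the restrictions of stab_G(v) and stab_H(v) to B(v,k) coincide; and (ii) G, H and G ∩ H all have the same vertex orbits on T. Then G^(k) = H^(k). -/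
open SimpleGraph Set

variable {V : Type*}

/-- if `G` and `H` have the same local actions on `k`-balls at every
vertex, and `G`, `H` and `G ∩ H` have the same vertex orbits, then `G^(k) = H^(k)`. -/
theorem kClosure_eq_of_same_local_action_and_orbits (T : SimpleGraph V) (hT : T.IsTree)
    (hlf : ∀ v : V, (T.neighborSet v).Finite)
    (G H : Subgroup (T ≃g T)) (k : ℕ)
    (hloc : ∀ v : V,
      {f : V → V | ∃ g ∈ G, g v = v ∧ ∀ u ∈ _root_.ball T v k, g u = f u} =
        {f : V → V | ∃ h ∈ H, h v = v ∧ ∀ u ∈ _root_.ball T v k, h u = f u})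
    (horbG : ∀ v : V, {u : V | ∃ g ∈ G, g v = u} =
        {u : V | ∃ x : T ≃g T, x ∈ G ∧ x ∈ H ∧ x v = u})
    (horbH : ∀ v : V, {u : V | ∃ h ∈ H, h v = u} =
        {u : V | ∃ x : T ≃g T, x ∈ G ∧ x ∈ H ∧ x v = u}) :
    kClosure T (G : Set (T ≃g T)) k = kClosure T (H : Set (T ≃g T)) k := by
  have key : ∀ (A B : Subgroup (T ≃g T)),
      (∀ v : V,
        {f : V → V | ∃ g ∈ A, g v = v ∧ ∀ u ∈ _root_.ball T v k, g u = f u} =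
          {f : V → V | ∃ h ∈ B, h v = v ∧ ∀ u ∈ _root_.ball T v k, h u = f u}) →
      (∀ v : V, ∀ g ∈ A, ∃ y : T ≃g T, y ∈ A ∧ y ∈ B ∧ y v = g v) →
      kClosure T (A : Set (T ≃g T)) k ⊆ kClosure T (B : Set (T ≃g T)) k := by
    intro A B hl ho x hx v
    obtain ⟨g, hgA, hg⟩ := hx v
    obtain ⟨y, hyA, hyB, hyv⟩ := ho v g hgA
    have hmem : (fun u => (y⁻¹ * g) u) ∈
        {f : V → V | ∃ g' ∈ A, g' v = v ∧ ∀ u ∈ _root_.ball T v k, g' u = f u} := by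
      refine ⟨y⁻¹ * g, mul_mem (inv_mem hyA) hgA, ?_, fun u _ => rfl⟩
      show y⁻¹ (g v) = v
      rw [← hyv]
      exact y.symm_apply_apply v
    rw [hl v] at hmem
    obtain ⟨h', hh'B, _, hh'⟩ := hmem
    refine ⟨y * h', mul_mem hyB hh'B, fun u hu => ?_⟩
    show y (h' u) = x u
    rw [hh' u hu]
    exact (y.apply_symm_apply (g u)).trans (hg u hu)
  refine le_antisymm (key G H hloc fun v g hg => ?_) (key H G (fun v => (hloc v).symm) fun v h hh => ?_)
  · have : g v ∈ {u : V | ∃ g ∈ G, g v = u} := ⟨g, hg, rfl⟩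
    rw [horbG v] at this
    obtain ⟨y, h1, h2, h3⟩ := this
    exact ⟨y, h1, h2, h3⟩
  · have : h v ∈ {u : V | ∃ h ∈ H, h v = u} := ⟨h, hh, rfl⟩
    rw [horbH v] at this
    obtain ⟨y, h1, h2, h3⟩ := this
    exact ⟨y, h2, h1, h3⟩
end

section
/- If G ≤ Aut(T) satisfies Property IP_k, then G satisfies Property IP_{k+1}. -/
open SimpleGraph Set

variable {V : Type*}

/-- Property `IP_k` for a set `S` of automorphisms of `T`: for every edge `(v,w)`, every
element of the pointwise fixator of `B(v,k) ∩ B(w,k)` in `S` decomposes as a product of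
two such elements, the first fixing the semi-tree `T_{(v,w)}` pointwise and the second
fixing `T_{(w,v)}` pointwise. -/
def PropertyIPk (T : SimpleGraph V) (S : Set (T ≃g T)) (k : ℕ) : Prop :=
  ∀ v w : V, T.Adj v w → ∀ f ∈ S, Fixes f (_root_.ball T v k ∩ _root_.ball T w k) →
    ∃ f₁ ∈ S, ∃ f₂ ∈ S,
      Fixes f₁ (_root_.ball T v k ∩ _root_.ball T w k) ∧ Fixes f₂ (_root_.ball T v k ∩ _root_.ball T w k) ∧
      Fixes f₁ (semiTree T v w) ∧ Fixes f₂ (semiTree T w v) ∧ f = f₁ * f₂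

/-- In a tree, distances to the two endpoints of an edge are never equal. -/
lemma tree_adj_dist_ne (T : SimpleGraph V) (hT : T.IsTree) {v w : V} (hadj : T.Adj v w)
    (u : V) : T.dist v u ≠ T.dist w u := by
  classical
  intro heq
  obtain ⟨p, hp⟩ := hT.isConnected.exists_walk_length_eq_dist v u
  have hpb_le : p.bypass.length ≤ T.dist v u := hp ▸ p.length_bypass_le
  have hpb_ge : T.dist v u ≤ p.bypass.length := SimpleGraph.dist_le _
  have hpb : p.bypass.length = T.dist v u := le_antisymm hpb_le hpb_ge
  by_cases hw : w ∈ p.bypass.support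
  · have hdrop : T.dist w u ≤ (p.bypass.dropUntil w hw).length := SimpleGraph.dist_le _
    have hsplit : (p.bypass.takeUntil w hw).length + (p.bypass.dropUntil w hw).length
        = p.bypass.length := by
      have := congr_arg SimpleGraph.Walk.length (p.bypass.take_spec hw)
      rwa [SimpleGraph.Walk.length_append] at this
    have htake : 0 < (p.bypass.takeUntil w hw).length := by
      rcases Nat.eq_zero_or_pos (p.bypass.takeUntil w hw).length with h' | h'
      · exact absurd (SimpleGraph.Walk.eq_of_length_eq_zero h') hadj.ne
      · exact h'
    omega
  · have hcons : (SimpleGraph.Walk.cons hadj.symm p.bypass).IsPath :=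
      p.bypass_isPath.cons hw
    obtain ⟨q, hq⟩ := hT.isConnected.exists_walk_length_eq_dist w u
    have hqb : q.bypass.IsPath := q.bypass_isPath
    have huniq := (SimpleGraph.isTree_iff_existsUnique_path.mp hT).2 w u
    obtain ⟨r, _, hr⟩ := huniq
    have h1 : SimpleGraph.Walk.cons hadj.symm p.bypass = r := hr _ hcons
    have h2 : q.bypass = r := hr _ hqb
    have hlen : (SimpleGraph.Walk.cons hadj.symm p.bypass).length = q.bypass.length := by
      rw [h1, h2]
    have hqb_le : q.bypass.length ≤ T.dist w u := hq ▸ q.length_bypass_le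
    simp only [SimpleGraph.Walk.length_cons] at hlen
    omega

/-- Property `IP_k` implies Property `IP_{k+1}`. -/
theorem propertyIPk_succ (T : SimpleGraph V) (hT : T.IsTree)
    (hlf : ∀ v : V, (T.neighborSet v).Finite)
    (G : Subgroup (T ≃g T)) (k : ℕ)
    (h : PropertyIPk T (G : Set (T ≃g T)) k) :
    PropertyIPk T (G : Set (T ≃g T)) (k + 1) := by
  intro v w hadj f hfG hfFix
  have hsub : _root_.ball T v k ∩ _root_.ball T w k ⊆ _root_.ball T v (k+1) ∩ _root_.ball T w (k+1) := by
    rintro u ⟨h1, h2⟩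
    exact ⟨le_trans h1 (Nat.le_succ k), le_trans h2 (Nat.le_succ k)⟩
  obtain ⟨f₁, hf₁G, f₂, hf₂G, hfix1, hfix2, hsemi1, hsemi2, heq⟩ :=
    h v w hadj f hfG (fun u hu => hfFix u (hsub hu))
  have hfix1' : Fixes f₁ (_root_.ball T v (k+1) ∩ _root_.ball T w (k+1)) := by
    rintro u ⟨h1, h2⟩
    rcases lt_or_ge (T.dist w u) (T.dist v u) with hlt | hle
    · exact hsemi1 u hlt
    · have hlt' : T.dist v u < T.dist w u :=
        lt_of_le_of_ne hle (tree_adj_dist_ne T hT hadj u)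
      have hf2u : f₂ u = u := hsemi2 u hlt'
      have : f u = u := hfFix u ⟨h1, h2⟩
      calc f₁ u = f₁ (f₂ u) := by rw [hf2u]
        _ = f u := by rw [heq]; rfl
        _ = u := this
  have hfix2' : Fixes f₂ (_root_.ball T v (k+1) ∩ _root_.ball T w (k+1)) := by
    intro u hu
    have h1 : f₁ (f₂ u) = f₁ u := by
      have : f₁ (f₂ u) = f u := by rw [heq]; rfl
      rw [this, hfFix u hu, hfix1' u hu]
    exact f₁.injective h1
  exact ⟨f₁, hf₁G, f₂, hf₂G, hfix1', hfix2', hsemi1, hsemi2, heq⟩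
end

section
/- If G ≤ Aut(T) satisfies Property IP_k, then G^(k) equals the topological closure of G in Aut(T). -/
open SimpleGraph Set

variable {V : Type*}

variable {T : SimpleGraph V}

lemma tree_path_length (hT : T.IsTree) {a b : V} {p : T.Walk a b} (hp : p.IsPath) :
    p.length = T.dist a b := by
  obtain ⟨q, hq, hql⟩ := hT.isConnected.exists_path_of_dist a b
  have := hT.IsAcyclic.path_unique ⟨p, hp⟩ ⟨q, hq⟩
  rw [Subtype.ext_iff] at this
  simp only at this
  rw [this, hql]

lemma dist_split (hT : T.IsTree) {a b t : V} {p : T.Walk a b} (hp : p.IsPath)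
    (ht : t ∈ p.support) : T.dist a t + T.dist t b = T.dist a b := by
  classical
  have h1 := tree_path_length hT (hp.takeUntil ht)
  have h2 := tree_path_length hT (hp.dropUntil ht)
  have h3 := SimpleGraph.Walk.take_spec p ht
  have h4 : (p.takeUntil t ht).length + (p.dropUntil t ht).length = p.length := by
    rw [← SimpleGraph.Walk.length_append, h3]
  rw [h1, h2] at h4
  rw [h4, tree_path_length hT hp]

lemma isPath_concat {a b c : V} {p : T.Walk a c} (hp : p.IsPath) (h : T.Adj c b)
    (hb : b ∉ p.support) : (p.concat h).IsPath := by
  rw [SimpleGraph.Walk.isPath_def, SimpleGraph.Walk.support_concat]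
  rw [List.nodup_append]
  refine ⟨hp.support_nodup, List.nodup_singleton b, ?_⟩
  intro t htp t' hts htt'
  simp only [List.mem_singleton] at hts
  subst hts
  subst htt'
  exact hb htp

lemma isPath_append {a b c : V} {p : T.Walk a c} {q : T.Walk c b} (hp : p.IsPath)
    (hq : q.IsPath) (hd : ∀ t ∈ p.support, t ∈ q.support → t = c) :
    (p.append q).IsPath := by
  rw [SimpleGraph.Walk.isPath_def, SimpleGraph.Walk.support_append, List.nodup_append]
  refine ⟨hp.support_nodup, hq.support_nodup.tail, ?_⟩
  intro t htp t' hts htt'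
  subst htt'
  have htq : t ∈ q.support := List.tail_subset _ hts
  have heq := hd t htp htq
  have hcons := SimpleGraph.Walk.support_eq_cons q
  have hnd := hq.support_nodup
  rw [hcons] at hnd
  rw [heq] at hts
  exact (List.nodup_cons.mp hnd).1 hts

lemma adj_dist_ne (hT : T.IsTree) {v w : V} (hvw : T.Adj v w) (u : V) :
    T.dist v u ≠ T.dist w u := by
  classical
  intro heq
  obtain ⟨p, hp, hpl⟩ := hT.isConnected.exists_path_of_dist u v
  obtain ⟨q, hq, hql⟩ := hT.isConnected.exists_path_of_dist u w
  have hvq : v ∉ q.support := by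
    intro hvq
    have := dist_split hT hq hvq
    have hvw1 : T.dist v w = 1 := (SimpleGraph.dist_eq_one_iff_adj).mpr hvw
    rw [hvw1] at this
    rw [SimpleGraph.dist_comm (u := u) (v := v), SimpleGraph.dist_comm (u := u) (v := w)] at this
    omega
  have hconc : (q.concat hvw.symm).IsPath := isPath_concat hq hvw.symm hvq
  have h1 := tree_path_length hT hconc
  have h2 : (q.concat hvw.symm).length = q.length + 1 := SimpleGraph.Walk.length_concat q hvw.symm
  rw [h2, hql] at h1
  rw [SimpleGraph.dist_comm (u := u) (v := v), SimpleGraph.dist_comm (u := u) (v := w)] at h1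
  omega

lemma adj_dist_cases (hT : T.IsTree) {v w : V} (hvw : T.Adj v w) (u : V) :
    T.dist v u = T.dist w u + 1 ∨ T.dist w u = T.dist v u + 1 := by
  have h1 : T.dist v u ≤ T.dist v w + T.dist w u := hT.isConnected.dist_triangle
  have h2 : T.dist w u ≤ T.dist w v + T.dist v u := hT.isConnected.dist_triangle
  have h3 : T.dist v w = 1 := (SimpleGraph.dist_eq_one_iff_adj).mpr hvw
  have h4 : T.dist w v = 1 := (SimpleGraph.dist_eq_one_iff_adj).mpr hvw.symm
  have h5 := adj_dist_ne hT hvw u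
  omega

lemma support_side (hT : T.IsTree) {v w : V} (hvw : T.Adj v w) {b t : V}
    (hb : T.dist w b < T.dist v b) {p : T.Walk w b} (hp : p.IsPath) (ht : t ∈ p.support) :
    T.dist w t < T.dist v t := by
  rcases adj_dist_cases hT hvw t with hc | hc
  · omega
  · exfalso
    have hsplit := dist_split hT hp ht
    have htr : T.dist v b ≤ T.dist v t + T.dist t b := hT.isConnected.dist_triangle
    omega

lemma dist_cross (hT : T.IsTree) {v w : V} (hvw : T.Adj v w) {a b : V}
    (ha : T.dist v a < T.dist w a) (hb : T.dist w b < T.dist v b) :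
    T.dist a b = T.dist a v + 1 + T.dist w b := by
  classical
  obtain ⟨p, hp, hpl⟩ := hT.isConnected.exists_path_of_dist v a
  obtain ⟨q, hq, hql⟩ := hT.isConnected.exists_path_of_dist w b
  have hwp : w ∉ p.support := by
    intro hwp
    have := dist_split hT hp hwp
    have h1 : T.dist v w = 1 := (SimpleGraph.dist_eq_one_iff_adj).mpr hvw
    have h2 : T.dist w a ≤ T.dist w a := le_refl _
    omega
  have hc : (p.reverse.concat hvw).IsPath := by
    apply isPath_concat hp.reverse hvw
    rw [SimpleGraph.Walk.support_reverse, List.mem_reverse]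
    exact hwp
  have hP : ((p.reverse.concat hvw).append q).IsPath := by
    apply isPath_append hc hq
    intro t htc htq
    rw [SimpleGraph.Walk.support_concat, List.mem_append] at htc
    rcases htc with htc | htc
    · exfalso
      rw [SimpleGraph.Walk.support_reverse, List.mem_reverse] at htc
      have h1 : T.dist v t < T.dist w t := support_side hT hvw.symm ha hp htc
      have h2 : T.dist w t < T.dist v t := support_side hT hvw hb hq htq
      omega
    · simpa using htc
  have hlen := tree_path_length hT hP
  rw [SimpleGraph.Walk.length_append, SimpleGraph.Walk.length_concat,
    SimpleGraph.Walk.length_reverse, hpl, hql] at hlen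
  rw [← hlen, SimpleGraph.dist_comm (u := a) (v := v)]

lemma dist_getVert_le (hT : T.IsTree) {a b : V} (p : T.Walk a b) (i : ℕ) :
    T.dist a (p.getVert i) ≤ i := by
  induction i with
  | zero => simp [SimpleGraph.Walk.getVert_zero]
  | succ n ih =>
    by_cases hn : n < p.length
    · have hadj := p.adj_getVert_succ hn
      have h1 : T.dist a (p.getVert (n+1)) ≤ T.dist a (p.getVert n) + T.dist (p.getVert n) (p.getVert (n+1)) :=
        hT.isConnected.dist_triangle
      have h2 : T.dist (p.getVert n) (p.getVert (n+1)) = 1 :=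
        (SimpleGraph.dist_eq_one_iff_adj).mpr hadj
      omega
    · push_neg at hn
      rw [p.getVert_of_length_le (by omega : p.length ≤ n+1)]
      have h3 : p.getVert n = b := p.getVert_of_length_le hn
      rw [h3] at ih
      omega

lemma dist_getVert (hT : T.IsTree) {a b : V} {p : T.Walk a b} (hp : p.IsPath)
    {i : ℕ} (hi : i ≤ p.length) : T.dist a (p.getVert i) = i := by
  classical
  set t := p.getVert i with hti
  have hts : t ∈ p.support := by
    rw [SimpleGraph.Walk.mem_support_iff_exists_getVert]
    exact ⟨i, rfl, hi⟩
  have hsplit := dist_split hT hp hts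
  have h1 : T.dist a t ≤ i := dist_getVert_le hT p i
  have h2 : T.dist b t ≤ p.length - i := by
    have := dist_getVert_le hT p.reverse (p.length - i)
    rwa [SimpleGraph.Walk.getVert_reverse, (by omega : p.length - (p.length - i) = i)] at this
  have h3 : T.dist t b = T.dist b t := SimpleGraph.dist_comm (u := t) (v := b)
  have h4 : p.length = T.dist a b := tree_path_length hT hp
  omega

lemma ball_finite_s14 (hT : T.IsTree) (hlf : ∀ v : V, (T.neighborSet v).Finite) (v : V) (k : ℕ) :
    {u | T.dist v u ≤ k}.Finite := by
  induction k with
  | zero =>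
    apply Set.Finite.subset (Set.finite_singleton v)
    intro u hu
    simp only [Set.mem_setOf_eq, Nat.le_zero] at hu
    have : v = u := (hT.isConnected.dist_eq_zero_iff).mp hu
    simp [this]
  | succ n ih =>
    apply Set.Finite.subset (ih.union ((ih.biUnion (fun u _ => hlf u))))
    intro t ht
    simp only [Set.mem_setOf_eq] at ht
    by_cases h : T.dist v t ≤ n
    · exact Or.inl h
    · have hd : T.dist v t = n + 1 := by omega
      obtain ⟨p, hp, hpl⟩ := hT.isConnected.exists_path_of_dist v t
      right
      refine Set.mem_biUnion (show T.dist v (p.getVert n) ≤ n from ?_) ?_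
      · exact le_of_eq (dist_getVert hT hp (by omega))
      · have : T.Adj (p.getVert n) (p.getVert (n+1)) := p.adj_getVert_succ (by omega)
        rw [show p.getVert (n+1) = t from p.getVert_of_length_le (by omega)] at this
        exact this

lemma key_lemma (hT : T.IsTree) (hlf : ∀ v : V, (T.neighborSet v).Finite)
    (G : Subgroup (T ≃g T)) (k : ℕ) (h : PropertyIPk T (G : Set (T ≃g T)) k)
    (x : T ≃g T) (hx : x ∈ kClosure T (G : Set (T ≃g T)) k) (v₀ : V) :
    ∀ n : ℕ, ∃ g ∈ G, ∀ u : V, T.dist v₀ u ≤ k + n → g u = x u := by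
  classical
  intro n
  induction n with
  | zero =>
    obtain ⟨g, hg, hga⟩ := hx v₀
    exact ⟨g, hg, fun u hu => hga u (by simpa [_root_.ball] using hu)⟩
  | succ n ihn =>
    obtain ⟨g0, hg0, hg0a⟩ := ihn
    -- inner induction over the sphere
    have main : ∀ s : Finset V, ∃ g ∈ G, ∀ u : V,
        (T.dist v₀ u ≤ k + n ∨ (T.dist v₀ u ≤ k + n + 1 ∧
          ∃ w ∈ s, T.dist v₀ w = n + 1 ∧ T.dist v₀ w + T.dist w u = T.dist v₀ u)) →
        g u = x u := by
      intro s
      induction s using Finset.induction_on with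
      | empty =>
        refine ⟨g0, hg0, fun u hu => ?_⟩
        rcases hu with hu | ⟨_, w, hw, _⟩
        · exact hg0a u hu
        · simp at hw
      | @insert w s hws ihs =>
        obtain ⟨g, hg, hga⟩ := ihs
        by_cases hwd : T.dist v₀ w = n + 1
        swap
        · refine ⟨g, hg, fun u hu => ?_⟩
          apply hga
          rcases hu with hu | ⟨hu1, w', hw', hw'2, hw'3⟩
          · exact Or.inl hu
          · rcases Finset.mem_insert.mp hw' with rfl | hw's
            · exact absurd hw'2 hwd
            · exact Or.inr ⟨hu1, w', hw's, hw'2, hw'3⟩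
        -- the parent vertex v
        obtain ⟨p, hp, hpl⟩ := hT.isConnected.exists_path_of_dist v₀ w
        set v := p.getVert n with hv
        have hvd : T.dist v₀ v = n := dist_getVert hT hp (by omega)
        have hvw : T.Adj v w := by
          have := p.adj_getVert_succ (i := n) (by omega)
          rwa [show p.getVert (n+1) = w from p.getVert_of_length_le (by omega)] at this
        obtain ⟨gw, hgw, hgwa⟩ := hx w
        have hgwa' : ∀ u : V, T.dist w u ≤ k → gw u = x u := fun u hu =>
          hgwa u (by simpa [_root_.ball] using hu)
        -- the fixator element
        set f : T ≃g T := g⁻¹ * gw with hf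
        have hfG : f ∈ G := mul_mem (inv_mem hg) hgw
        have hgxa : ∀ u : V, T.dist v₀ u ≤ k + n → g u = x u := fun u hu =>
          hga u (Or.inl hu)
        have hffix : Fixes f (_root_.ball T w k ∩ _root_.ball T v k) := by
          intro u hu
          obtain ⟨hu1, hu2⟩ := hu
          simp only [_root_.ball, Set.mem_setOf_eq] at hu1 hu2
          have hd : T.dist v₀ u ≤ k + n := by
            have := hT.isConnected.dist_triangle (u := v₀) (v := v) (w := u)
            omega
          have h1 : g u = x u := hgxa u hd
          have h2 : gw u = x u := hgwa' u hu1
          show g⁻¹ (gw u) = u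
          rw [h2, ← h1]
          simp
        obtain ⟨f₁, hf₁G, f₂, hf₂G, _, _, hf₁fix, hf₂fix, hprod⟩ :=
          h w v hvw.symm f hfG hffix
        set g' : T ≃g T := g * f₁ with hg'
        have hg'G : g' ∈ G := mul_mem hg hf₁G
        -- g' agrees with g on the v-side
        have hside1 : ∀ u : V, T.dist v u < T.dist w u → g' u = g u := by
          intro u hu
          have : f₁ u = u := hf₁fix u hu
          show g (f₁ u) = g u
          rw [this]
        -- g' agrees with gw on the w-side
        have hside2 : ∀ u : V, T.dist w u < T.dist v u → g' u = gw u := by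
          intro u hu
          have h2 : f₂ u = u := hf₂fix u hu
          have : f₁ u = f u := by rw [hprod]; show f₁ u = f₁ (f₂ u); rw [h2]
          show g (f₁ u) = gw u
          rw [this]
          show g (g⁻¹ (gw u)) = gw u
          simp
        refine ⟨g', hg'G, fun u hu => ?_⟩
        have hv₀side : T.dist v v₀ < T.dist w v₀ := by
          rw [SimpleGraph.dist_comm (u := v) (v := v₀),
            SimpleGraph.dist_comm (u := w) (v := v₀)]
          omega
        rcases hu with hu | ⟨hu1, w', hw', hw'2, hw'3⟩
        · -- old agreement region, ≤ k+n
          rcases adj_dist_cases hT hvw u with hc | hc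
          · -- u on the w-side
            have hcross := dist_cross hT hvw hv₀side (by omega : T.dist w u < T.dist v u)
            have hwu : T.dist w u ≤ k := by omega
            rw [hside2 u (by omega)]
            exact hgwa' u hwu
          · -- u on the v-side
            rw [hside1 u (by omega)]
            exact hgxa u hu
        · rcases Finset.mem_insert.mp hw' with heq | hw's
          · -- the new sphere vertex w' = w
            rw [heq] at hw'2 hw'3
            rcases adj_dist_cases hT hvw u with hc | hc
            · -- w-side: close to w
              have hwu : T.dist w u ≤ k := by omega
              rw [hside2 u (by omega)]
              exact hgwa' u hwu
            · -- v-side: impossible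
              exfalso
              have := hT.isConnected.dist_triangle (u := v₀) (v := v) (w := u)
              omega
          · -- an already handled sphere vertex
            have hgu : g u = x u := hga u (Or.inr ⟨hu1, w', hw's, hw'2, hw'3⟩)
            rcases adj_dist_cases hT hvw u with hc | hc
            · have hcross := dist_cross hT hvw hv₀side (by omega : T.dist w u < T.dist v u)
              have hwu : T.dist w u ≤ k := by omega
              rw [hside2 u (by omega)]
              exact hgwa' u hwu
            · rw [hside1 u (by omega)]
              exact hgu
    -- now apply with the full sphere
    set S : Finset V := ((ball_finite_s14 hT hlf v₀ (n+1)).toFinset).filter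
      (fun w => T.dist v₀ w = n + 1) with hS
    obtain ⟨g, hg, hga⟩ := main S
    refine ⟨g, hg, fun u hu => ?_⟩
    apply hga
    by_cases hun : T.dist v₀ u ≤ k + n
    · exact Or.inl hun
    · right
      refine ⟨hu, ?_⟩
      have hud : n + 1 ≤ T.dist v₀ u := by omega
      obtain ⟨p, hp, hpl⟩ := hT.isConnected.exists_path_of_dist v₀ u
      refine ⟨p.getVert (n+1), ?_, dist_getVert hT hp (by omega), ?_⟩
      · rw [hS, Finset.mem_filter, Set.Finite.mem_toFinset]
        have hd := dist_getVert hT hp (i := n+1) (by omega)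
        exact ⟨by simpa using le_of_eq hd, hd⟩
      · have hmem : p.getVert (n+1) ∈ p.support := by
          rw [SimpleGraph.Walk.mem_support_iff_exists_getVert]
          exact ⟨n+1, rfl, by omega⟩
        rw [dist_getVert hT hp (by omega : n+1 ≤ p.length)]
        have := dist_split hT hp hmem
        rw [dist_getVert hT hp (by omega : n+1 ≤ p.length)] at this
        omega

/-- if `G` satisfies Property `IP_k` then its `k`-closure equals its
topological closure in `Aut(T)`. -/
theorem kClosure_eq_closure_of_propertyIPk (T : SimpleGraph V) (hT : T.IsTree)
    (hlf : ∀ v : V, (T.neighborSet v).Finite)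
    (G : Subgroup (T ≃g T)) (k : ℕ)
    (h : PropertyIPk T (G : Set (T ≃g T)) k) :
    kClosure T (G : Set (T ≃g T)) k = closure (G : Set (T ≃g T)) := by
  classical
  letI : TopologicalSpace V := ⊥
  haveI : DiscreteTopology V := discreteTopology_bot V
  have hcont : Continuous (fun (g : T ≃g T) => (g : V → V)) := continuous_induced_dom
  have hopen : ∀ (x : T ≃g T) (F : Finset V),
      IsOpen {y : T ≃g T | ∀ u ∈ F, y u = x u} := by
    intro x F
    have h2 : IsOpen (Set.pi (↑F : Set V) (fun u => ({x u} : Set V))) :=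
      isOpen_set_pi F.finite_toSet (fun a _ => isOpen_discrete _)
    have h3 := h2.preimage hcont
    convert h3 using 1
    rfl
  apply Set.Subset.antisymm
  · -- kClosure ⊆ closure
    intro x hx
    rw [mem_closure_iff]
    intro o ho hxo
    obtain ⟨W, hW, rfl⟩ := isOpen_induced_iff.mp ho
    have hxW : (x : V → V) ∈ W := hxo
    obtain ⟨I, usets, hIu, hpi⟩ := isOpen_pi_iff.mp hW _ hxW
    obtain ⟨v₀⟩ : Nonempty V := hT.isConnected.nonempty
    set m := I.sup (fun i => T.dist v₀ i) with hm
    obtain ⟨g, hg, hga⟩ := key_lemma hT hlf G k h x hx v₀ m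
    refine ⟨g, ?_, hg⟩
    apply hpi
    intro i hi
    have hdist : T.dist v₀ i ≤ k + m :=
      le_trans (Finset.le_sup (f := fun i => T.dist v₀ i) hi) (Nat.le_add_left m k)
    show g i ∈ usets i
    rw [hga i hdist]
    exact (hIu i hi).2
  · -- closure ⊆ kClosure
    apply closure_minimal
    · intro g hg v
      exact ⟨g, hg, fun u _ => rfl⟩
    · rw [← isOpen_compl_iff, isOpen_iff_forall_mem_open]
      intro x hx
      rw [Set.mem_compl_iff, kClosure, Set.mem_setOf_eq] at hx
      push_neg at hx
      obtain ⟨v, hv⟩ := hx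
      refine ⟨{y : T ≃g T | ∀ u ∈ (ball_finite_s14 hT hlf v k).toFinset, y u = x u},
        ?_, hopen x _, ?_⟩
      · intro y hy
        rw [Set.mem_compl_iff, kClosure, Set.mem_setOf_eq]
        push_neg
        refine ⟨v, fun g hg => ?_⟩
        obtain ⟨u, hu, hne⟩ := hv g hg
        refine ⟨u, hu, fun habs => hne ?_⟩
        rw [habs]
        have hub : u ∈ (ball_finite_s14 hT hlf v k).toFinset := by
          rw [Set.Finite.mem_toFinset]; exact hu
        exact hy u hub
      · intro u _
        rfl
end

section
/- Let G ≤ Aut(T) be closed, satisfying Property P_k, let h ∈ G induce a non-trivial translation along a doubly-infinite path C, and let K = Fix_G(C^{k-1}). Then K = [h,K] = { h g h⁻¹ g⁻¹ : g ∈ K }. -/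
open SimpleGraph Set

variable {V : Type*}

/-- The `m`-neighbourhood `C^m` of a set of vertices: all vertices at distance at most
`m` from `C`. -/
def nbhd (T : SimpleGraph V) (C : Set V) (m : ℕ) : Set V :=
  {u | ∃ c ∈ C, T.dist c u ≤ m}

/-- The fibre over `x ∈ C` of the nearest-point projection onto `C`: vertices for which
`x` is a closest vertex of `C`. -/
def fiber (T : SimpleGraph V) (C : Set V) (x : V) : Set V :=
  {u | ∀ y ∈ C, T.dist x u ≤ T.dist y u}

/-- A (finite, infinite or doubly-infinite) path in a tree, viewed as a non-empty convex
set of vertices in which every vertex has at most two neighbours. -/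
def IsPath (T : SimpleGraph V) (C : Set V) : Prop :=
  IsSubtree T C ∧ ∀ v ∈ C, ∃ a b : V, {u | u ∈ C ∧ T.Adj v u} ⊆ {a, b}

/-- Property `P_k`: for every path `C`, the natural homomorphism from the pointwise
fixator of `C^{k-1}` to the product over `x ∈ C` of the permutation groups induced on
the projection fibres `π⁻¹(x)` is an isomorphism (injective and surjective). -/
def PropertyPk (T : SimpleGraph V) (S : Set (T ≃g T)) (k : ℕ) : Prop :=
  ∀ C : Set V, IsPath T C →
    (∀ g ∈ S, ∀ g' ∈ S, Fixes g (nbhd T C (k - 1)) → Fixes g' (nbhd T C (k - 1)) →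
      (∀ x ∈ C, ∀ u ∈ fiber T C x, g u = g' u) → g = g') ∧
    (∀ gf : V → T ≃g T,
      (∀ x ∈ C, gf x ∈ S ∧ Fixes (gf x) (nbhd T C (k - 1))) →
      ∃ g ∈ S, Fixes g (nbhd T C (k - 1)) ∧
        ∀ x ∈ C, ∀ u ∈ fiber T C x, g u = gf x u)

section Aux
variable {T : SimpleGraph V}

lemma iso_dist_le (f : T ≃g T) (hc : T.Connected) (u v : V) :
    T.dist (f u) (f v) ≤ T.dist u v := by
  obtain ⟨p, hp⟩ := (hc u v).exists_walk_length_eq_dist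
  calc T.dist (f u) (f v) ≤ (p.map f.toHom).length := SimpleGraph.dist_le _
    _ = T.dist u v := by rw [Walk.length_map, hp]

lemma iso_dist (f : T ≃g T) (hc : T.Connected) (u v : V) :
    T.dist (f u) (f v) = T.dist u v := by
  refine le_antisymm (iso_dist_le f hc u v) ?_
  have := iso_dist_le f⁻¹ hc (f u) (f v)
  simpa using this

def cwalk (c : ℤ → V) (hadj : ∀ n : ℤ, T.Adj (c n) (c (n + 1))) (i : ℤ) :
    (n : ℕ) → T.Walk (c i) (c (i + n))
  | 0 => Walk.nil.copy rfl (by simp)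
  | n + 1 => ((cwalk c hadj i n).concat (hadj (i + n))).copy rfl
      (congrArg c (by push_cast; ring))

lemma cwalk_length (c : ℤ → V) (hadj : ∀ n : ℤ, T.Adj (c n) (c (n + 1))) (i : ℤ) :
    ∀ n : ℕ, (cwalk c hadj i n).length = n
  | 0 => by simp [cwalk]
  | n + 1 => by simp [cwalk, Walk.length_copy, Walk.length_concat, cwalk_length c hadj i n]

lemma cwalk_support (c : ℤ → V) (hadj : ∀ n : ℤ, T.Adj (c n) (c (n + 1))) (i : ℤ) :
    ∀ n : ℕ, (cwalk c hadj i n).support = (List.range (n + 1)).map (fun j : ℕ => c (i + (j:ℤ)))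
  | 0 => by
      rw [cwalk, Walk.support_copy, Walk.support_nil, List.range_succ]
      simp
  | n + 1 => by
      rw [cwalk, Walk.support_copy, Walk.support_concat, cwalk_support c hadj i n,
        List.range_succ (n := n + 1), List.map_append]
      simp [add_assoc]

lemma cwalk_isPath (c : ℤ → V) (hinj : Function.Injective c)
    (hadj : ∀ n : ℤ, T.Adj (c n) (c (n + 1))) (i : ℤ) (n : ℕ) :
    (cwalk c hadj i n).IsPath := by
  rw [Walk.isPath_def, cwalk_support]
  refine List.Nodup.map ?_ List.nodup_range
  intro a b hab
  have := hinj hab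
  omega

lemma dist_c_nat (hT : T.IsTree) (c : ℤ → V) (hinj : Function.Injective c)
    (hadj : ∀ n : ℤ, T.Adj (c n) (c (n + 1))) (i : ℤ) (n : ℕ) :
    T.dist (c i) (c (i + n)) = n := by
  obtain ⟨p, hp, hlen⟩ := hT.isConnected.exists_path_of_dist (c i) (c (i + n))
  have huniq := (hT.existsUnique_path (c i) (c (i + n))).unique hp
    (cwalk_isPath c hinj hadj i n)
  rw [← hlen, huniq, cwalk_length]

lemma dist_c (hT : T.IsTree) (c : ℤ → V) (hinj : Function.Injective c)
    (hadj : ∀ n : ℤ, T.Adj (c n) (c (n + 1))) (i j : ℤ) :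
    T.dist (c i) (c j) = (j - i).natAbs := by
  rcases le_total i j with hij | hij
  · obtain ⟨n, hn⟩ : ∃ n : ℕ, j = i + n := ⟨(j - i).toNat, by omega⟩
    subst hn
    rw [dist_c_nat hT c hinj hadj]
    omega
  · obtain ⟨n, hn⟩ : ∃ n : ℕ, i = j + n := ⟨(i - j).toNat, by omega⟩
    subst hn
    rw [SimpleGraph.dist_comm, dist_c_nat hT c hinj hadj]
    omega

lemma mem_range_of_between (hT : T.IsTree) (c : ℤ → V) (hinj : Function.Injective c)
    (hadj : ∀ n : ℤ, T.Adj (c n) (c (n + 1))) (i j : ℤ) (w : V)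
    (hw : T.dist (c i) w + T.dist w (c j) = T.dist (c i) (c j)) (hij : i ≤ j) :
    w ∈ Set.range c := by
  obtain ⟨n, hn⟩ : ∃ n : ℕ, j = i + n := ⟨(j - i).toNat, by omega⟩
  subst hn
  obtain ⟨p1, hp1, hl1⟩ := hT.isConnected.exists_path_of_dist (c i) w
  obtain ⟨p2, hp2, hl2⟩ := hT.isConnected.exists_path_of_dist w (c (i + n))
  set q := p1.append p2 with hq
  have hqlen : q.length = T.dist (c i) (c (i + n)) := by
    rw [hq, Walk.length_append, hl1, hl2, hw]
  have hqpath : q.IsPath := q.isPath_of_length_eq_dist hqlen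
  have huniq := (hT.existsUnique_path (c i) (c (i + n))).unique hqpath
    (cwalk_isPath c hinj hadj i n)
  have hwmem : w ∈ q.support := by
    rw [Walk.mem_support_append_iff]
    exact Or.inl p1.end_mem_support
  rw [huniq, cwalk_support] at hwmem
  obtain ⟨m, _, hm⟩ := List.mem_map.mp hwmem
  exact ⟨i + m, hm⟩

lemma isPath_range (hT : T.IsTree) (c : ℤ → V) (hinj : Function.Injective c)
    (hadj : ∀ n : ℤ, T.Adj (c n) (c (n + 1))) :
    IsPath T (Set.range c) := by
  constructor
  · constructor
    · exact ⟨c 0, 0, rfl⟩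
    · rintro u ⟨i, rfl⟩ v ⟨j, rfl⟩ w hw
      rcases le_total i j with hij | hij
      · exact mem_range_of_between hT c hinj hadj i j w hw hij
      · refine mem_range_of_between hT c hinj hadj j i w ?_ hij
        have h1 : T.dist (c j) w = T.dist w (c j) := SimpleGraph.dist_comm
        have h2 : T.dist w (c i) = T.dist (c i) w := SimpleGraph.dist_comm
        have h3 : T.dist (c j) (c i) = T.dist (c i) (c j) := SimpleGraph.dist_comm
        omega
  · rintro v ⟨n, rfl⟩
    refine ⟨c (n - 1), c (n + 1), ?_⟩
    rintro u ⟨⟨m, rfl⟩, hadj'⟩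
    have h1 : T.dist (c n) (c m) = 1 := SimpleGraph.dist_eq_one_iff_adj.mpr hadj'
    rw [dist_c hT c hinj hadj] at h1
    have : m = n - 1 ∨ m = n + 1 := by omega
    rcases this with h | h <;> subst h <;> simp

lemma fixes_one (S : Set V) : Fixes (1 : T ≃g T) S := fun _ _ => rfl

lemma fixes_mul {a b : T ≃g T} {S : Set V} (ha : Fixes a S) (hb : Fixes b S) :
    Fixes (a * b) S := fun u hu => by
  show a (b u) = u
  rw [hb u hu, ha u hu]

lemma fixes_inv {a : T ≃g T} {S : Set V} (ha : Fixes a S) : Fixes a⁻¹ S := fun u hu => by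
  have := congrArg a.symm (ha u hu)
  exact (by simpa using this.symm : a.symm u = u)

lemma fixes_conj {f b : T ≃g T} {S : Set V} (hb : Fixes b S) (hf : ∀ u ∈ S, f⁻¹ u ∈ S) :
    Fixes (f * b * f⁻¹) S := fun u hu => by
  show f (b (f⁻¹ u)) = u
  rw [hb _ (hf u hu)]
  exact f.apply_symm_apply u

def Bpos (h g : T ≃g T) : ℕ → (T ≃g T)
  | 0 => 1
  | n + 1 => g⁻¹ * (h * Bpos h g n * h⁻¹)

def Bneg (h g : T ≃g T) : ℕ → (T ≃g T)
  | 0 => 1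
  | n + 1 => h⁻¹ * (g * Bneg h g n) * h

def Bseq (h g : T ≃g T) : ℤ → (T ≃g T)
  | Int.ofNat n => Bpos h g n
  | Int.negSucc n => Bneg h g (n + 1)

lemma Bseq_succ (h g : T ≃g T) (m : ℤ) :
    Bseq h g (m + 1) = g⁻¹ * (h * Bseq h g m * h⁻¹) := by
  rcases m with n | n
  · rw [show (Int.ofNat n) + 1 = Int.ofNat (n + 1) by rfl]
    rfl
  · cases n with
    | zero =>
        rw [show (Int.negSucc 0) + 1 = Int.ofNat 0 by rfl]
        show (1 : T ≃g T) = g⁻¹ * (h * (h⁻¹ * (g * 1) * h) * h⁻¹)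
        group
    | succ n =>
        rw [show (Int.negSucc (n + 1)) + 1 = Int.negSucc n by
          rw [Int.negSucc_eq, Int.negSucc_eq]; push_cast; ring]
        show Bneg h g (n + 1) = g⁻¹ * (h * (h⁻¹ * (g * Bneg h g (n + 1)) * h) * h⁻¹)
        group

lemma Bseq_mem {G : Subgroup (T ≃g T)} {N : Set V} {h g : T ≃g T}
    (hh : h ∈ G) (hgG : g ∈ G) (hgF : Fixes g N)
    (hN : ∀ u ∈ N, h u ∈ N) (hNi : ∀ u ∈ N, h⁻¹ u ∈ N) (m : ℤ) :
    Bseq h g m ∈ G ∧ Fixes (Bseq h g m) N := by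
  have hpos : ∀ n : ℕ, Bpos h g n ∈ G ∧ Fixes (Bpos h g n) N := by
    intro n
    induction n with
    | zero => exact ⟨one_mem G, fixes_one N⟩
    | succ n ih =>
        refine ⟨mul_mem (inv_mem hgG) (mul_mem (mul_mem hh ih.1) (inv_mem hh)), ?_⟩
        exact fixes_mul (fixes_inv hgF) (fixes_conj ih.2 hNi)
  have hneg : ∀ n : ℕ, Bneg h g n ∈ G ∧ Fixes (Bneg h g n) N := by
    intro n
    induction n with
    | zero => exact ⟨one_mem G, fixes_one N⟩
    | succ n ih =>
        refine ⟨mul_mem (mul_mem (inv_mem hh) (mul_mem hgG ih.1)) hh, ?_⟩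
        have : h⁻¹ * (g * Bneg h g n) * h = h⁻¹ * (g * Bneg h g n) * (h⁻¹)⁻¹ := by group
        rw [Bneg, this]
        exact fixes_conj (fixes_mul hgF ih.2) (by simpa using hN)
  rcases m with n | n
  · exact hpos n
  · exact hneg (n + 1)

end Aux

/-- if `G` is closed with Property `P_k` and `h ∈ G` induces a non-trivial
translation along a doubly-infinite path `C`, then the fixator `K` of `C^{k-1}` in `G`
satisfies `K = [h,K]`. -/
theorem fixator_eq_commutator (T : SimpleGraph V) (hT : T.IsTree)
    (hlf : ∀ v : V, (T.neighborSet v).Finite)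
    (G : Subgroup (T ≃g T)) (hG : IsClosed (G : Set (T ≃g T))) (k : ℕ)
    (hPk : PropertyPk T (G : Set (T ≃g T)) k)
    (c : ℤ → V) (hinj : Function.Injective c)
    (hadj : ∀ n : ℤ, T.Adj (c n) (c (n + 1)))
    (h : T ≃g T) (hh : h ∈ G)
    (htrans : ∃ a : ℤ, a ≠ 0 ∧ ∀ n : ℤ, h (c n) = c (n + a)) :
    {g : T ≃g T | g ∈ G ∧ Fixes g (nbhd T (Set.range c) (k - 1))} =
      (fun g => h * g * h⁻¹ * g⁻¹) ''
        {g : T ≃g T | g ∈ G ∧ Fixes g (nbhd T (Set.range c) (k - 1))} := by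
  classical
  obtain ⟨a, ha0, hac⟩ := htrans
  set C : Set V := Set.range c with hC
  set N : Set V := nbhd T C (k - 1) with hN
  have hconn : T.Connected := hT.isConnected
  have hdist : ∀ (f : T ≃g T) (u v : V), T.dist (f u) (f v) = T.dist u v :=
    fun f u v => iso_dist f hconn u v
  have hCpath : IsPath T C := isPath_range hT c hinj hadj
  have hinvc : ∀ n : ℤ, h⁻¹ (c n) = c (n - a) := by
    intro n
    have := hac (n - a)
    rw [sub_add_cancel] at this
    rw [← this]
    exact h.symm_apply_apply _
  have hNfwd : ∀ u ∈ N, h u ∈ N := by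
    rintro u ⟨y, ⟨m, rfl⟩, hy⟩
    exact ⟨c (m + a), ⟨m + a, rfl⟩, by rw [← hac m, hdist h]; exact hy⟩
  have hNbwd : ∀ u ∈ N, h⁻¹ u ∈ N := by
    rintro u ⟨y, ⟨m, rfl⟩, hy⟩
    exact ⟨c (m - a), ⟨m - a, rfl⟩, by rw [← hinvc m, hdist h⁻¹]; exact hy⟩
  have hfib : ∀ n : ℤ, ∀ u ∈ fiber T C (c n), h⁻¹ u ∈ fiber T C (c (n - a)) := by
    rintro n u hu y ⟨m, rfl⟩
    have e1 : T.dist (c (n - a)) (h⁻¹ u) = T.dist (c n) u := by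
      rw [← hinvc n, hdist h⁻¹]
    have e2 : T.dist (c m) (h⁻¹ u) = T.dist (c (m + a)) u := by
      rw [← hac m, ← hdist h⁻¹ (h (c m)) u, RelIso.inv_apply_self]
    rw [e1, e2]
    exact hu (c (m + a)) ⟨m + a, rfl⟩
  have ediv : ∀ n : ℤ, (n - a) / a = n / a - 1 := by
    intro n
    have := Int.add_mul_ediv_right (n - a) 1 ha0
    simp only [one_mul, sub_add_cancel] at this
    omega
  obtain ⟨hPkInj, hPkSurj⟩ := hPk C hCpath
  ext g
  simp only [Set.mem_setOf_eq, Set.mem_image]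
  constructor
  · rintro ⟨hgG, hgF⟩
    set gf : V → (T ≃g T) :=
      fun x => if hx : x ∈ C then Bseq h g (hx.choose / a) else 1 with hgf
    have hgf_eq : ∀ n : ℤ, gf (c n) = Bseq h g (n / a) := by
      intro n
      have hx : c n ∈ C := ⟨n, rfl⟩
      rw [hgf]
      simp only [dif_pos hx]
      rw [hinj hx.choose_spec]
    have hBmem : ∀ m : ℤ, Bseq h g m ∈ G ∧ Fixes (Bseq h g m) N :=
      Bseq_mem hh hgG hgF hNfwd hNbwd
    obtain ⟨b, hbG, hbF, hbAct⟩ := hPkSurj gf (by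
      rintro x ⟨n, rfl⟩
      rw [hgf_eq n]
      exact hBmem (n / a))
    have key : h * b * h⁻¹ = g * b := by
      refine hPkInj _ (mul_mem (mul_mem hh hbG) (inv_mem hh)) _ (mul_mem hgG hbG)
        (fixes_conj hbF hNbwd) (fixes_mul hgF hbF) ?_
      rintro x ⟨n, rfl⟩ u hu
      have h1 : b (h⁻¹ u) = Bseq h g (n / a - 1) (h⁻¹ u) := by
        rw [hbAct (c (n - a)) ⟨n - a, rfl⟩ (h⁻¹ u) (hfib n u hu), hgf_eq, ediv]
      have h2 : b u = Bseq h g (n / a) u := by rw [hbAct (c n) ⟨n, rfl⟩ u hu, hgf_eq]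
      have h3 : Bseq h g (n / a) = g⁻¹ * (h * Bseq h g (n / a - 1) * h⁻¹) := by
        rw [← Bseq_succ, sub_add_cancel]
      show h (b (h⁻¹ u)) = g (b u)
      rw [h1, h2, h3]
      show h (Bseq h g (n / a - 1) (h⁻¹ u)) = (g * (g⁻¹ * (h * Bseq h g (n / a - 1) * h⁻¹))) u
      rw [← mul_assoc, mul_inv_cancel, one_mul]
      rfl
    refine ⟨b, ⟨hbG, hbF⟩, ?_⟩
    rw [key]
    group
  · rintro ⟨b, ⟨hbG, hbF⟩, rfl⟩
    refine ⟨mul_mem (mul_mem (mul_mem hh hbG) (inv_mem hh)) (inv_mem hbG), ?_⟩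
    intro u hu
    show h (b (h⁻¹ (b⁻¹ u))) = u
    rw [fixes_inv hbF u hu, hbF _ (hNbwd u hu)]
    exact h.apply_symm_apply u
end
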